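/- Let v: [0,1] → ℝ^n be an affine path V_τ = τ w + (1−τ) v₀ and let Φ: ℝ → ℝ≥0 be convex, nondecreasing, with Φ(ξ) = (ξ − L)_+ for some L ≥ 0. Then the function τ ↦ Φ²(|V_τ|²) is convex on [0,1]. In particular, Φ²(|w|²) − Φ²(|v₀|²) ≥ 4 Φ(|v₀|²) Φ'(|v₀|²) ⟨v₀, w − v₀⟩, i.e. 4 (Φ Φ')(|v₀|²) ⟨v₀, v₀ − w⟩ ≥ Φ²(|v₀|²) − Φ²(|w|²), where Φ'(ξ) = 𝟙_{ξ ≥ L}. -/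

import Mathlib

open Set

lemma normsq_convex {E : Type*} [NormedAddCommGroup E] [NormedSpace ℝ E] :
    ConvexOn ℝ Set.univ (fun x : E => ‖x‖^2) := by
  refine ⟨convex_univ, fun x _ y _ a b ha hb hab => ?_⟩
  have h1 : ‖a • x + b • y‖ ≤ a * ‖x‖ + b * ‖y‖ := by
    calc ‖a • x + b • y‖ ≤ ‖a • x‖ + ‖b • y‖ := norm_add_le _ _
    _ = a * ‖x‖ + b * ‖y‖ := by rw [norm_smul, norm_smul, Real.norm_of_nonneg ha, Real.norm_of_nonneg hb]
  have h2 : ‖a • x + b • y‖^2 ≤ (a * ‖x‖ + b * ‖y‖)^2 :=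
    pow_le_pow_left₀ (norm_nonneg _) h1 2
  simp only [smul_eq_mul]
  nlinarith [sq_nonneg (‖x‖ - ‖y‖), norm_nonneg x, norm_nonneg y, mul_nonneg ha hb]

lemma phi_convex (L : ℝ) : ConvexOn ℝ Set.univ (fun s : ℝ => (max (s - L) 0)^2) := by
  have hm : ConvexOn ℝ Set.univ (fun s : ℝ => max (s - L) 0) := by
    have h1 : ConvexOn ℝ Set.univ (fun s : ℝ => s - L) :=
      (convexOn_id convex_univ).sub (concaveOn_const _ convex_univ)
    have h2 : ConvexOn ℝ Set.univ (fun _ : ℝ => (0:ℝ)) := convexOn_const _ convex_univ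
    exact h1.sup h2
  have := hm.mul hm (fun x _ => le_max_right _ _) (fun x _ => le_max_right _ _)
    (monovaryOn_self _ _)
  have heq : (fun s : ℝ => max (s - L) 0) * (fun s : ℝ => max (s - L) 0)
      = fun s : ℝ => (max (s - L) 0)^2 := by
    funext s; simp [sq]
  rwa [heq] at this

lemma phi_mono (L : ℝ) : Monotone (fun s : ℝ => (max (s - L) 0)^2) := by
  intro a b hab
  exact pow_le_pow_left₀ (le_max_right _ _) (max_le_max (by linarith) le_rfl) 2

/-- with `Φ(ξ) = (ξ - L)₊` and `Φ'(ξ) = 𝟙_{ξ ≥ L}`, the map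
`τ ↦ Φ²(|τ w + (1-τ) v₀|²)` is convex on `[0,1]`, and
`4 (Φ Φ')(|v₀|²) ⟨v₀, v₀ - w⟩ ≥ Φ²(|v₀|²) - Φ²(|w|²)`. -/
theorem stmt3 (n : ℕ) (L : ℝ) (hL : 0 ≤ L) (v₀ w : EuclideanSpace ℝ (Fin n)) :
    ConvexOn ℝ (Set.Icc (0:ℝ) 1)
      (fun τ : ℝ => (max (‖τ • w + (1 - τ) • v₀‖^2 - L) 0)^2) ∧
    (max (‖w‖^2 - L) 0)^2 - (max (‖v₀‖^2 - L) 0)^2 ≥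
      4 * (max (‖v₀‖^2 - L) 0) * (if L ≤ ‖v₀‖^2 then (1:ℝ) else 0) *
        (inner ℝ v₀ (w - v₀) : ℝ) ∧
    4 * (max (‖v₀‖^2 - L) 0) * (if L ≤ ‖v₀‖^2 then (1:ℝ) else 0) *
        (inner ℝ v₀ (v₀ - w) : ℝ) ≥
      (max (‖v₀‖^2 - L) 0)^2 - (max (‖w‖^2 - L) 0)^2 := by
  -- convexity of q
  have hq : ConvexOn ℝ (Set.Icc (0:ℝ) 1) (fun τ : ℝ => ‖τ • w + (1 - τ) • v₀‖^2) := by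
    have h := (normsq_convex (E := EuclideanSpace ℝ (Fin n))).comp_affineMap
      (AffineMap.lineMap v₀ w)
    have h2 := h.subset (Set.subset_univ _) (convex_Icc 0 1)
    refine h2.congr fun τ _ => ?_
    have hl : (AffineMap.lineMap v₀ w) τ = τ • w + (1 - τ) • v₀ := by
      simp only [AffineMap.lineMap_apply, vsub_eq_sub, vadd_eq_add]
      module
    simp [Function.comp, hl]
  constructor
  · refine ⟨convex_Icc 0 1, fun x hx y hy a b ha hb hab => ?_⟩
    have hq' := hq.2 hx hy ha hb hab
    calc (max (‖(a • x + b • y) • w + (1 - (a • x + b • y)) • v₀‖^2 - L) 0)^2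
        ≤ (max ((a * ‖x • w + (1-x) • v₀‖^2 + b * ‖y • w + (1-y) • v₀‖^2) - L) 0)^2 :=
          phi_mono L (by simpa using hq')
      _ ≤ a * (max (‖x • w + (1-x) • v₀‖^2 - L) 0)^2
          + b * (max (‖y • w + (1-y) • v₀‖^2 - L) 0)^2 := by
          have := (phi_convex L).2 (Set.mem_univ (‖x • w + (1-x) • v₀‖^2))
            (Set.mem_univ (‖y • w + (1-y) • v₀‖^2)) ha hb hab
          simpa using this
  -- inequalities
  have key : 2 * (inner ℝ v₀ (w - v₀) : ℝ) ≤ ‖w‖^2 - ‖v₀‖^2 := by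
    have h1 : ‖w - v₀‖^2 = ‖w‖^2 - 2 * (inner ℝ w v₀ : ℝ) + ‖v₀‖^2 := norm_sub_sq_real w v₀
    have h2 : (inner ℝ v₀ (w - v₀) : ℝ) = (inner ℝ w v₀ : ℝ) - ‖v₀‖^2 := by
      rw [inner_sub_right, real_inner_self_eq_norm_sq, real_inner_comm]
    nlinarith [sq_nonneg ‖w - v₀‖]
  have hiv : (inner ℝ v₀ (v₀ - w) : ℝ) = -(inner ℝ v₀ (w - v₀) : ℝ) := by
    rw [inner_sub_right, inner_sub_right]; ring
  set a := ‖v₀‖^2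
  set b := ‖w‖^2
  by_cases hLa : L ≤ a
  · simp only [if_pos hLa]
    have hma : max (a - L) 0 = a - L := max_eq_left (by linarith)
    rw [hma]
    have hstep : 4 * (a - L) * 1 * (inner ℝ v₀ (w - v₀) : ℝ) ≤ 2 * (a - L) * (b - a) := by
      nlinarith
    by_cases hLb : L ≤ b
    · have hmb : max (b - L) 0 = b - L := max_eq_left (by linarith)
      rw [hmb]
      constructor
      · nlinarith [sq_nonneg ((b - L) - (a - L))]
      · rw [hiv]; nlinarith [sq_nonneg ((b - L) - (a - L))]
    · have hmb : max (b - L) 0 = 0 := max_eq_right (by linarith)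
      rw [hmb]
      push_neg at hLb
      constructor
      · nlinarith [sq_nonneg (a - L)]
      · rw [hiv]; nlinarith [sq_nonneg (a - L)]
  · simp only [if_neg hLa]
    have hma : max (a - L) 0 = 0 := max_eq_right (by push_neg at hLa; linarith)
    rw [hma]
    constructor
    · simp
    · simp
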